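/- There is an R-algebra isomorphism F̃(ℚ₊*,R) ≅ R[[x₁,x₂,...]][x₁⁻¹,x₂⁻¹,...], where a function α ∈ F̃(ℚ₊*,R) maps to Σ_{q ∈ ℚ₊*} α(q)q^x with q^x := x₁^{a₁}⋯x_r^{a_r} for q = p₁^{a₁}⋯p_r^{a_r} (aᵢ ∈ ℤ). -/

import Mathlib

/-- Type synonym: functions from `Γ` to `R`. -/
def DirF (Γ R : Type*) : Type _ := Γ → R

/-- Dirichlet convolution. -/
noncomputable def dconv {Γ R : Type*} [Mul Γ] [NonUnitalNonAssocSemiring R]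
    (α β : DirF Γ R) : DirF Γ R :=
  fun n => ∑ᶠ p ∈ {p : Γ × Γ | p.1 * p.2 = n}, α p.1 * β p.2

/-- The multiplicative group `ℚ₊*` of positive rationals. -/
def Qpos : Type := {q : ℚ // 0 < q}

instance : CommGroup Qpos := by unfold Qpos; infer_instance

/-- The carrier `F̃(ℚ₊*,R)`: functions `α : ℚ₊* → R` such that for some `d ∈ ℕ*`,
`α(q) ≠ 0` implies `dq ∈ ℕ*`. -/
def DirFQ (R : Type*) [Zero R] : Type _ :=
  {α : Qpos → R // ∃ d : ℕ+, ∀ q : Qpos, α q ≠ 0 → ∃ n : ℕ+, (d : ℚ) * q.val = (n : ℚ)}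

/-- A `CommRing` structure on `F̃(ℚ₊*,R)` is *the* convolution one if addition is pointwise
and multiplication is convolution on `ℚ₊*`. -/
def IsDirichletRingQ {R : Type*} [CommRing R] (inst : CommRing (DirFQ R)) : Prop := by
  letI := inst
  exact (∀ α β : DirFQ R, ∀ q : Qpos, (α + β).val q = α.val q + β.val q) ∧
    (∀ α β : DirFQ R, (α * β).val = dconv α.val β.val) ∧
    ((1 : DirFQ R).val 1 = 1 ∧ ∀ q : Qpos, q ≠ 1 → (1 : DirFQ R).val q = 0)

/-- The multiplicative set of monomials in `R[[x₁,x₂,...]]`. -/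
noncomputable def monomialSubmonoid (R : Type*) [CommRing R] : Submonoid (MvPowerSeries ℕ R) :=
  Submonoid.closure (Set.range (MvPowerSeries.X : ℕ → MvPowerSeries ℕ R))

namespace Stmt18Aux

noncomputable def P : ℕ → ℕ := Nat.nth Nat.Prime

lemma P_inj : Function.Injective P := Nat.nth_injective Nat.infinite_setOf_prime

lemma P_prime (i : ℕ) : (P i).Prime := Nat.prime_nth_prime i

/-- The positive natural number with prime-exponent vector `m`. -/
noncomputable def Nn (m : ℕ →₀ ℕ) : ℕ := ∏ i ∈ m.support, P i ^ m i

lemma Nn_def (m : ℕ →₀ ℕ) : Nn m = ∏ i ∈ m.support, (Nat.nth Nat.Prime i) ^ (m i) := rfl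

lemma Nn_ne_zero (m : ℕ →₀ ℕ) : Nn m ≠ 0 :=
  Finset.prod_ne_zero_iff.mpr fun i _ => pow_ne_zero _ (P_prime i).pos.ne'

lemma Nn_pos (m : ℕ →₀ ℕ) : 0 < Nn m := Nat.pos_of_ne_zero (Nn_ne_zero m)

lemma fact_Nn (m : ℕ →₀ ℕ) : (Nn m).factorization = m.mapDomain P := by
  rw [Nn, Nat.factorization_prod (fun i _ => pow_ne_zero _ (P_prime i).pos.ne'),
    Finsupp.mapDomain]
  exact Finset.sum_congr rfl fun i _ => (P_prime i).factorization_pow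

lemma Nn_add (a b : ℕ →₀ ℕ) : Nn (a + b) = Nn a * Nn b := by
  have h := Nat.factorization_mul (Nn_ne_zero a) (Nn_ne_zero b)
  have : (Nn (a+b)).factorization = (Nn a * Nn b).factorization := by
    rw [h, fact_Nn, fact_Nn, fact_Nn, Finsupp.mapDomain_add]
  exact Nat.eq_of_factorization_eq (Nn_ne_zero _) (mul_ne_zero (Nn_ne_zero a) (Nn_ne_zero b))
    fun p => by rw [this]

lemma Nn_inj : Function.Injective Nn := fun a b h => by
  have := congrArg Nat.factorization h
  rw [fact_Nn, fact_Nn] at this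
  exact Finsupp.mapDomain_injective P_inj this

lemma Nn_surj (n : ℕ) (hn : n ≠ 0) : ∃ m, Nn m = n := by
  refine ⟨Finsupp.comapDomain P n.factorization (P_inj.injOn), ?_⟩
  apply Nat.eq_of_factorization_eq (Nn_ne_zero _) hn
  intro p
  rw [fact_Nn]
  rcases em (p.Prime) with hp | hp
  · obtain ⟨i, rfl⟩ : ∃ i, P i = p := ⟨Nat.count Nat.Prime p, Nat.nth_count hp⟩
    rw [Finsupp.mapDomain_apply P_inj, Finsupp.comapDomain_apply]
  · rw [Nat.factorization_eq_zero_of_not_prime _ hp]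
    rw [Finsupp.mapDomain_notin_range]
    rintro ⟨i, rfl⟩; exact hp (P_prime i)

lemma Nn_dvd_iff {a b : ℕ →₀ ℕ} : Nn a ∣ Nn b ↔ a ≤ b := by
  rw [← Nat.factorization_le_iff_dvd (Nn_ne_zero a) (Nn_ne_zero b), fact_Nn, fact_Nn]
  constructor
  · intro h i
    have := h (P i)
    rwa [Finsupp.mapDomain_apply P_inj, Finsupp.mapDomain_apply P_inj] at this
  · intro h p
    rcases em (∃ i, P i = p) with ⟨i, rfl⟩ | hp
    · rw [Finsupp.mapDomain_apply P_inj, Finsupp.mapDomain_apply P_inj]; exact h i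
    · rw [Finsupp.mapDomain_notin_range _ _ hp, Finsupp.mapDomain_notin_range _ _ hp]

/-- The positive rational `Nn m / Nn d`. -/
noncomputable def qq (m d : ℕ →₀ ℕ) : Qpos :=
  ⟨(Nn m : ℚ) / (Nn d : ℚ), by
    have h1 : (0:ℚ) < Nn m := by exact_mod_cast Nn_pos m
    have h2 : (0:ℚ) < Nn d := by exact_mod_cast Nn_pos d
    positivity⟩

lemma qq_val (m d : ℕ →₀ ℕ) : (qq m d).val = (Nn m : ℚ) / (Nn d : ℚ) := rfl

lemma Nd_ne_zero (d : ℕ →₀ ℕ) : (Nn d : ℚ) ≠ 0 := by exact_mod_cast Nn_ne_zero d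

lemma qq_inj {m m' d : ℕ →₀ ℕ} (h : qq m d = qq m' d) : m = m' := by
  have := congrArg Subtype.val h
  rw [qq_val, qq_val, div_eq_div_iff (Nd_ne_zero d) (Nd_ne_zero d)] at this
  have : (Nn m : ℚ) = Nn m' := mul_right_cancel₀ (Nd_ne_zero d) this
  exact Nn_inj (by exact_mod_cast this)

lemma qq_sub {d' m : ℕ →₀ ℕ} (d : ℕ →₀ ℕ) (h : d' ≤ m) : qq (m - d') d = qq m (d + d') := by
  apply Subtype.ext
  rw [qq_val, qq_val, Nn_add, div_eq_div_iff (Nd_ne_zero d) (by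
    exact_mod_cast mul_ne_zero (Nd_ne_zero d) (Nd_ne_zero d'))]
  have : Nn (m - d') * Nn d' = Nn m := by rw [← Nn_add, tsub_add_cancel_of_le h]
  push_cast [← this]
  ring

section Ring

variable {R : Type*} [CommRing R]

/-- The bound predicate: `α q ≠ 0` forces `Nn d * q ∈ ℕ`. -/
def Bnd (α : Qpos → R) (d : ℕ →₀ ℕ) : Prop :=
  ∀ q : Qpos, α q ≠ 0 → ∃ n : ℕ, n ≠ 0 ∧ (Nn d : ℚ) * q.val = (n : ℚ)

lemma Bnd.add_right {α : Qpos → R} {d : ℕ →₀ ℕ} (h : Bnd α d) (e : ℕ →₀ ℕ) :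
    Bnd α (d + e) := by
  intro q hq
  obtain ⟨n, hn0, hn⟩ := h q hq
  refine ⟨Nn e * n, mul_ne_zero (Nn_ne_zero e) hn0, ?_⟩
  rw [Nn_add]
  push_cast
  rw [mul_comm (Nn d : ℚ) (Nn e : ℚ), mul_assoc, hn]

/-- `F` is the power series of `α` with denominator `d`. -/
def Matches (α : Qpos → R) (d : ℕ →₀ ℕ) (F : MvPowerSeries ℕ R) : Prop :=
  ∀ m : ℕ →₀ ℕ, MvPowerSeries.coeff (R := R) m F = α (qq m d)

/-- The canonical power series of `α` with denominator `d`. -/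
noncomputable def Fser (α : Qpos → R) (d : ℕ →₀ ℕ) : MvPowerSeries ℕ R :=
  fun m => α (qq m d)

lemma matches_Fser (α : Qpos → R) (d : ℕ →₀ ℕ) : Matches α d (Fser α d) := fun _ => rfl

lemma prodX_eq (m : ℕ →₀ ℕ) :
    (∏ i ∈ m.support, (MvPowerSeries.X i : MvPowerSeries ℕ R) ^ m i)
      = MvPowerSeries.monomial (R := R) m 1 := by
  classical
  have : ∀ i ∈ m.support, (MvPowerSeries.X i : MvPowerSeries ℕ R) ^ m i
      = MvPowerSeries.monomial (R := R) (Finsupp.single i (m i)) 1 :=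
    fun i _ => MvPowerSeries.X_pow_eq i (m i)
  rw [Finset.prod_congr rfl this]
  have key : ∀ (s : Finset ℕ) (f : ℕ →₀ ℕ),
      (∏ i ∈ s, MvPowerSeries.monomial (R := R) (Finsupp.single i (f i)) 1)
        = MvPowerSeries.monomial (R := R) (∑ i ∈ s, Finsupp.single i (f i)) 1 := by
    intro s
    induction s using Finset.induction with
    | empty => intro f; simp
    | insert _ _ hx ih =>
      intro f
      rw [Finset.prod_insert hx, Finset.sum_insert hx, ih f,
        MvPowerSeries.monomial_mul_monomial, one_mul]
  have hs : (∑ i ∈ m.support, Finsupp.single i (m i)) = m := Finsupp.sum_single m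
  rw [key m.support m, hs]

lemma vanish {α : Qpos → R} {d d' m : ℕ →₀ ℕ} (hd' : Bnd α d')
    (h : ¬ d ≤ m) (hm : d' ≤ m) : α (qq (m - d') d) = 0 := by
  by_contra hne
  obtain ⟨n, hn0, hn⟩ := hd' _ hne
  rw [qq_val] at hn
  have hmm : Nn (m - d') * Nn d' = Nn m := by rw [← Nn_add, tsub_add_cancel_of_le hm]
  have hq : (Nn m : ℚ) = (n : ℚ) * (Nn d : ℚ) := by
    have h2 : (Nn d' : ℚ) * (Nn (m - d') : ℚ) = (n : ℚ) * (Nn d : ℚ) := by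
      field_simp [Nd_ne_zero d] at hn
      linear_combination hn
    push_cast [← hmm]
    linear_combination h2
  have heq : Nn m = n * Nn d := by exact_mod_cast hq
  exact h ((Nn_dvd_iff (a := d) (b := m)).mp (Dvd.intro_left n heq.symm))

lemma cross {α : Qpos → R} {d d' : ℕ →₀ ℕ} {F F' : MvPowerSeries ℕ R}
    (hd : Bnd α d) (hd' : Bnd α d') (hF : Matches α d F) (hF' : Matches α d' F') :
    MvPowerSeries.monomial (R := R) d' 1 * F = MvPowerSeries.monomial (R := R) d 1 * F' := by
  ext m
  rw [MvPowerSeries.coeff_monomial_mul, MvPowerSeries.coeff_monomial_mul]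
  rcases em (d' ≤ m) with h1 | h1 <;> rcases em (d ≤ m) with h2 | h2
  · rw [if_pos h1, if_pos h2, one_mul, one_mul, hF, hF', qq_sub d h1, qq_sub d' h2,
      add_comm d' d]
  · rw [if_pos h1, if_neg h2, one_mul, hF, vanish hd' h2 h1]
  · rw [if_neg h1, if_pos h2, one_mul, hF', vanish hd h1 h2]
  · rw [if_neg h1, if_neg h2]

lemma monomial_mem (m : ℕ →₀ ℕ) :
    MvPowerSeries.monomial (R := R) m 1 ∈ monomialSubmonoid R := by
  rw [← prodX_eq]
  exact Submonoid.prod_mem _ fun i _ => Submonoid.pow_mem _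
    (Submonoid.subset_closure (Set.mem_range_self i)) _

/-- The monomial `x^m` as an element of the submonoid. -/
noncomputable def sM (m : ℕ →₀ ℕ) : monomialSubmonoid R :=
  ⟨MvPowerSeries.monomial (R := R) m 1, monomial_mem m⟩

lemma mem_monomialSubmonoid {x : MvPowerSeries ℕ R} (hx : x ∈ monomialSubmonoid R) :
    ∃ m : ℕ →₀ ℕ, x = MvPowerSeries.monomial (R := R) m 1 := by
  induction hx using Submonoid.closure_induction with
  | mem y hy =>
    obtain ⟨i, rfl⟩ := hy
    exact ⟨Finsupp.single i 1, rfl⟩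
  | one => exact ⟨0, by simp⟩
  | mul a b _ _ ha hb =>
    obtain ⟨ma, rfl⟩ := ha
    obtain ⟨mb, rfl⟩ := hb
    exact ⟨ma + mb, by rw [MvPowerSeries.monomial_mul_monomial, one_mul]⟩

lemma monomial_cancel {u : ℕ →₀ ℕ} {F G : MvPowerSeries ℕ R}
    (h : MvPowerSeries.monomial (R := R) u 1 * F = MvPowerSeries.monomial (R := R) u 1 * G) : F = G := by
  ext m
  have := congrArg (MvPowerSeries.coeff (R := R) (u + m)) h
  rwa [MvPowerSeries.coeff_monomial_mul, MvPowerSeries.coeff_monomial_mul,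
    if_pos le_self_add, if_pos le_self_add, one_mul, one_mul, add_tsub_cancel_left] at this

lemma mk_indep {α : Qpos → R} {d d' : ℕ →₀ ℕ} {F F' : MvPowerSeries ℕ R}
    (hd : Bnd α d) (hd' : Bnd α d') (hF : Matches α d F) (hF' : Matches α d' F') :
    Localization.mk F (sM d) = Localization.mk F' (sM d') :=
  Localization.mk_eq_mk_iff.mpr (Localization.r_iff_exists.mpr
    ⟨1, by simpa [sM] using cross hd hd' hF hF'⟩)

lemma conv_coeff (α β : Qpos → R) {da db : ℕ →₀ ℕ} (ha : Bnd α da) (hb : Bnd β db)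
    (m : ℕ →₀ ℕ) :
    dconv α β (qq m (da + db)) = MvPowerSeries.coeff (R := R) m (Fser α da * Fser β db) := by
  classical
  rw [MvPowerSeries.coeff_mul m (Fser α da) (Fser β db)]
  set g : Qpos × Qpos → R := fun p => α p.1 * β p.2 with hg
  set T : Finset (Qpos × Qpos) :=
    (Finset.HasAntidiagonal.antidiagonal m).image (fun ab => (qq ab.1 da, qq ab.2 db)) with hT
  have memT : ∀ a b : ℕ →₀ ℕ, a + b = m → (qq a da, qq b db) ∈ T := by
    intro a b hab
    exact Finset.mem_image.mpr ⟨(a, b), Finset.HasAntidiagonal.mem_antidiagonal.mpr hab, rfl⟩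
  have prodval : ∀ a b : ℕ →₀ ℕ, a + b = m → qq a da * qq b db = qq m (da + db) := by
    intro a b hab
    apply Subtype.ext
    show (qq a da).val * (qq b db).val = _
    rw [qq_val, qq_val, qq_val, Nn_add, ← hab, Nn_add]
    push_cast
    rw [div_mul_div_comm]
  have hset : {p : Qpos × Qpos | p.1 * p.2 = qq m (da + db)} ∩ Function.support g
      = ↑T ∩ Function.support g := by
    ext p
    constructor
    · rintro ⟨hp, hsupp⟩
      have h1 : α p.1 ≠ 0 := fun h => hsupp (by rw [hg]; simp [h])
      have h2 : β p.2 ≠ 0 := fun h => hsupp (by rw [hg]; simp [h])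
      obtain ⟨n1, hn10, hn1⟩ := ha p.1 h1
      obtain ⟨n2, hn20, hn2⟩ := hb p.2 h2
      obtain ⟨a, rfl⟩ := Nn_surj n1 hn10
      obtain ⟨b, rfl⟩ := Nn_surj n2 hn20
      have hpa : p.1 = qq a da := by
        apply Subtype.ext
        rw [qq_val, eq_div_iff (Nd_ne_zero da), mul_comm, hn1]
      have hpb : p.2 = qq b db := by
        apply Subtype.ext
        rw [qq_val, eq_div_iff (Nd_ne_zero db), mul_comm, hn2]
      have hab : a + b = m := by
        apply Nn_inj
        have hv : (qq a da * qq b db).val = (qq m (da + db)).val := by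
          rw [← hpa, ← hpb, hp]
        have hv' : (Nn a : ℚ) / Nn da * ((Nn b : ℚ) / Nn db)
            = (Nn m : ℚ) / (Nn (da + db) : ℚ) := hv
        rw [div_mul_div_comm] at hv'
        have e1 : ((Nn da : ℚ) * Nn db) = ((Nn (da + db) : ℕ) : ℚ) := by
          rw [Nn_add]; push_cast; ring
        rw [e1, div_eq_div_iff (Nd_ne_zero (da + db)) (Nd_ne_zero (da + db))] at hv'
        have h4 : (Nn a : ℚ) * Nn b = (Nn m : ℚ) :=
          mul_right_cancel₀ (Nd_ne_zero (da + db)) hv'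
        rw [Nn_add]
        exact_mod_cast h4
      have hpp : p = (qq a da, qq b db) := Prod.ext hpa hpb
      rw [hpp]
      exact Set.mem_inter (Finset.mem_coe.mpr (memT a b hab)) (hpp ▸ hsupp)
    · rintro ⟨hpT, hsupp⟩
      obtain ⟨⟨a, b⟩, hab, heq⟩ := Finset.mem_image.mp (Finset.mem_coe.mp hpT)
      refine ⟨?_, hsupp⟩
      rw [← heq]
      exact prodval a b (Finset.HasAntidiagonal.mem_antidiagonal.mp hab)
  unfold dconv
  rw [finsum_mem_eq_sum_of_inter_support_eq g hset, hT]
  rw [Finset.sum_image ?hinj]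
  case hinj =>
    intro x _ y _ hxy
    have h1 : qq x.1 da = qq y.1 da := congrArg Prod.fst hxy
    have h2 : qq x.2 db = qq y.2 db := congrArg Prod.snd hxy
    exact Prod.ext (qq_inj h1) (qq_inj h2)
  rfl

lemma conv_bnd (α β : Qpos → R) {da db : ℕ →₀ ℕ} (ha : Bnd α da) (hb : Bnd β db) :
    Bnd (dconv α β) (da + db) := by
  intro q hq
  by_contra hcon
  push_neg at hcon
  apply hq
  unfold dconv
  apply finsum_mem_of_eqOn_zero
  intro p hp
  by_contra hgne
  have h1 : α p.1 ≠ 0 := fun h => hgne (by simp [h])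
  have h2 : β p.2 ≠ 0 := fun h => hgne (by simp [h])
  obtain ⟨n1, hn10, hn1⟩ := ha p.1 h1
  obtain ⟨n2, hn20, hn2⟩ := hb p.2 h2
  refine hcon (n1 * n2) (mul_ne_zero hn10 hn20) ?_
  have hqv : q.val = p.1.val * p.2.val := by rw [← hp]; rfl
  rw [hqv, Nn_add]
  push_cast
  rw [← hn1, ← hn2]
  ring

lemma bnd_of_pnat {α : DirFQ R} {d : ℕ+}
    (h : ∀ q : Qpos, α.val q ≠ 0 → ∃ n : ℕ+, (d : ℚ) * q.val = (n : ℚ))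
    {md : ℕ →₀ ℕ} (hmd : Nn md = (d : ℕ)) : Bnd α.val md := by
  intro q hq
  obtain ⟨n, hn⟩ := h q hq
  refine ⟨(n : ℕ), n.ne_zero, ?_⟩
  rw [hmd]
  exact_mod_cast hn

lemma exists_bnd (α : DirFQ R) : ∃ md, Bnd α.val md := by
  obtain ⟨d, hd⟩ := α.2
  obtain ⟨md, hmd⟩ := Nn_surj (d : ℕ) d.ne_zero
  exact ⟨md, bnd_of_pnat hd hmd⟩

noncomputable def mdc (α : DirFQ R) : ℕ →₀ ℕ := (exists_bnd α).choose

lemma bnd_mdc (α : DirFQ R) : Bnd α.val (mdc α) := (exists_bnd α).choose_spec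

noncomputable def fmap (α : DirFQ R) : Localization (monomialSubmonoid R) :=
  Localization.mk (Fser α.val (mdc α)) (sM (mdc α))

lemma fmap_eq {α : DirFQ R} {md : ℕ →₀ ℕ} {F : MvPowerSeries ℕ R}
    (hb : Bnd α.val md) (hm : Matches α.val md F) :
    fmap α = Localization.mk F (sM md) :=
  mk_indep (bnd_mdc α) hb (matches_Fser _ _) hm

lemma fmap_inj : Function.Injective (fmap (R := R)) := by
  intro α β h
  set D := mdc α + mdc β with hD
  have hA : Bnd α.val D := (bnd_mdc α).add_right _
  have hB : Bnd β.val D := by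
    have := (bnd_mdc β).add_right (mdc α); rwa [add_comm] at this
  rw [fmap_eq hA (matches_Fser _ D), fmap_eq hB (matches_Fser _ D)] at h
  obtain ⟨c, hc⟩ := Localization.r_iff_exists.mp (Localization.mk_eq_mk_iff.mp h)
  obtain ⟨u, hu⟩ := mem_monomialSubmonoid c.2
  rw [hu] at hc
  have hc2 : MvPowerSeries.monomial (R := R) u 1 * ((sM (R := R) D : MvPowerSeries ℕ R) * Fser α.val D)
      = MvPowerSeries.monomial (R := R) u 1 * ((sM (R := R) D : MvPowerSeries ℕ R) * Fser β.val D) := hc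
  have h3 : Fser α.val D = Fser β.val D :=
    monomial_cancel (u := D) (monomial_cancel (u := u) hc2)
  have key : ∀ (q : Qpos) (n : ℕ), n ≠ 0 → (Nn D : ℚ) * q.val = (n : ℚ) → α.val q = β.val q := by
    intro q n hn0 hn
    obtain ⟨a, rfl⟩ := Nn_surj n hn0
    have hq : q = qq a D := by
      apply Subtype.ext
      rw [qq_val, eq_div_iff (Nd_ne_zero D), mul_comm, hn]
    have := congrFun h3 a
    rw [hq]
    exact this
  apply Subtype.ext
  funext q
  by_cases hα : α.val q = 0
  · by_cases hβ : β.val q = 0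
    · rw [hα, hβ]
    · obtain ⟨n, hn0, hn⟩ := hB q hβ
      exact key q n hn0 hn
  · obtain ⟨n, hn0, hn⟩ := hA q hα
    exact key q n hn0 hn

lemma fmap_surj : Function.Surjective (fmap (R := R)) := by
  intro z
  induction z using Localization.ind with
  | _ y =>
  obtain ⟨F, s⟩ := y
  obtain ⟨u, hu⟩ := mem_monomialSubmonoid s.2
  classical
  set αf : Qpos → R := fun q =>
    if h : ∃ m, (Nn u : ℚ) * q.val = (Nn m : ℚ) then MvPowerSeries.coeff (R := R) h.choose F else 0
    with hαf
  have choose_eq : ∀ (q : Qpos) (h : ∃ m, (Nn u : ℚ) * q.val = (Nn m : ℚ)) (m : ℕ →₀ ℕ),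
      (Nn u : ℚ) * q.val = (Nn m : ℚ) → h.choose = m := by
    intro q h m hm
    apply Nn_inj
    exact_mod_cast (h.choose_spec.symm.trans hm)
  have hbnd : Bnd αf u := by
    intro q hq
    rw [hαf] at hq
    by_cases h : ∃ m, (Nn u : ℚ) * q.val = (Nn m : ℚ)
    · exact ⟨Nn h.choose, Nn_ne_zero _, h.choose_spec⟩
    · simp only [dif_neg h] at hq
      exact absurd rfl hq
  have hmat : Matches αf u F := by
    intro m
    have hqm : (Nn u : ℚ) * (qq m u).val = (Nn m : ℚ) := by
      rw [qq_val, mul_div_cancel₀ _ (Nd_ne_zero u)]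
    have hex : ∃ m', (Nn u : ℚ) * (qq m u).val = (Nn m' : ℚ) := ⟨m, hqm⟩
    rw [hαf]
    simp only [dif_pos hex]
    rw [choose_eq _ hex m hqm]
  have hmem : ∃ d : ℕ+, ∀ q : Qpos, αf q ≠ 0 → ∃ n : ℕ+, (d : ℚ) * q.val = (n : ℚ) := by
    refine ⟨⟨Nn u, Nn_pos u⟩, fun q hq => ?_⟩
    obtain ⟨n, hn0, hn⟩ := hbnd q hq
    exact ⟨⟨n, Nat.pos_of_ne_zero hn0⟩, by exact_mod_cast hn⟩
  refine ⟨⟨αf, hmem⟩, ?_⟩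
  rw [fmap_eq (α := ⟨αf, hmem⟩) hbnd hmat]
  congr 1
  exact Subtype.ext hu.symm

end Ring

end Stmt18Aux

/-- `F̃(ℚ₊*,R) ≅ R[[x₁,x₂,...]][x₁⁻¹,x₂⁻¹,...]`, i.e. `F̃(ℚ₊*,R)` is isomorphic as an
`R`-algebra to the localization of `R[[x₁,x₂,...]]` at the monomials; under the isomorphism
`α` corresponds to the fraction `(Σ_q α(q)(qd)^x) / d^x`. -/
theorem stmt18 {R : Type*} [CommRing R]
    [instQ : CommRing (DirFQ R)] (hQ : IsDirichletRingQ instQ) :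
    ∃ e : DirFQ R ≃+* Localization (monomialSubmonoid R),
      ∀ (α : DirFQ R) (d : ℕ+)
        (_ : ∀ q : Qpos, α.val q ≠ 0 → ∃ n : ℕ+, (d : ℚ) * q.val = (n : ℚ))
        (md : ℕ →₀ ℕ)
        (_ : (d : ℕ) = ∏ i ∈ md.support, (Nat.nth Nat.Prime i) ^ (md i))
        (F : MvPowerSeries ℕ R)
        (_ : ∀ (m : ℕ →₀ ℕ) (q : Qpos),
          (d : ℚ) * q.val = ((∏ i ∈ m.support, (Nat.nth Nat.Prime i) ^ (m i) : ℕ) : ℚ) →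
          MvPowerSeries.coeff (R := R) m F = α.val q)
        (s : monomialSubmonoid R)
        (_ : (s : MvPowerSeries ℕ R) = ∏ i ∈ md.support, (MvPowerSeries.X i) ^ (md i)),
        e α = Localization.mk F s := by
  classical
  obtain ⟨h_add, h_mul, -⟩ := hQ
  have hbij : Function.Bijective (Stmt18Aux.fmap (R := R)) :=
    ⟨Stmt18Aux.fmap_inj, Stmt18Aux.fmap_surj⟩
  refine ⟨{ Equiv.ofBijective _ hbij with map_mul' := ?_, map_add' := ?_ }, ?_⟩
  · intro α β
    show Stmt18Aux.fmap (α * β) = Stmt18Aux.fmap α * Stmt18Aux.fmap β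
    set da := Stmt18Aux.mdc α with hda
    set db := Stmt18Aux.mdc β with hdb
    have ha := Stmt18Aux.bnd_mdc α
    have hb := Stmt18Aux.bnd_mdc β
    have hbnd : Stmt18Aux.Bnd (α * β).val (da + db) := by
      rw [h_mul α β]; exact Stmt18Aux.conv_bnd _ _ ha hb
    have hmat : Stmt18Aux.Matches (α * β).val (da + db)
        (Stmt18Aux.Fser α.val da * Stmt18Aux.Fser β.val db) := by
      intro m
      rw [h_mul α β]
      exact (Stmt18Aux.conv_coeff _ _ ha hb m).symm
    rw [Stmt18Aux.fmap_eq hbnd hmat, Stmt18Aux.fmap, Stmt18Aux.fmap, Localization.mk_mul]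
    congr 1
    apply Subtype.ext
    show MvPowerSeries.monomial (R := R) (da + db) 1 = _
    show MvPowerSeries.monomial (R := R) (da + db) 1
      = MvPowerSeries.monomial (R := R) da 1 * MvPowerSeries.monomial (R := R) db 1
    rw [MvPowerSeries.monomial_mul_monomial, one_mul]
  · intro α β
    show Stmt18Aux.fmap (α + β) = Stmt18Aux.fmap α + Stmt18Aux.fmap β
    set D := Stmt18Aux.mdc α + Stmt18Aux.mdc β with hD
    have hA : Stmt18Aux.Bnd α.val D := (Stmt18Aux.bnd_mdc α).add_right _
    have hB : Stmt18Aux.Bnd β.val D := by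
      have := (Stmt18Aux.bnd_mdc β).add_right (Stmt18Aux.mdc α)
      rwa [add_comm] at this
    have hAB : Stmt18Aux.Bnd (α + β).val D := by
      intro q hq
      by_cases hα : α.val q = 0
      · refine hB q fun hβ => hq ?_
        rw [h_add α β q, hα, hβ, add_zero]
      · exact hA q hα
    have hmat : Stmt18Aux.Matches (α + β).val D
        (Stmt18Aux.Fser α.val D + Stmt18Aux.Fser β.val D) := by
      intro m
      rw [map_add, Stmt18Aux.matches_Fser α.val D m, Stmt18Aux.matches_Fser β.val D m,
        h_add α β]
    rw [Stmt18Aux.fmap_eq hAB hmat, Stmt18Aux.fmap_eq hA (Stmt18Aux.matches_Fser _ D),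
      Stmt18Aux.fmap_eq hB (Stmt18Aux.matches_Fser _ D), Localization.add_mk_self]
  · intro α d hb md hmd F hF s hs
    have hNn : Stmt18Aux.Nn md = (d : ℕ) := by rw [Stmt18Aux.Nn_def, hmd]
    have hbnd := Stmt18Aux.bnd_of_pnat hb hNn
    have hdq : ((d : ℕ+) : ℚ) = (Stmt18Aux.Nn md : ℚ) := by
      rw [hNn]
    have hmat : Stmt18Aux.Matches α.val md F := by
      intro m
      apply hF m (Stmt18Aux.qq m md)
      rw [hdq, Stmt18Aux.qq_val, mul_div_cancel₀ _ (Stmt18Aux.Nd_ne_zero md)]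
      exact_mod_cast Stmt18Aux.Nn_def m
    have hs' : s = Stmt18Aux.sM md := Subtype.ext (by rw [hs, Stmt18Aux.prodX_eq]; rfl)
    show Stmt18Aux.fmap α = _
    rw [Stmt18Aux.fmap_eq hbnd hmat, hs']
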